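/- For every integer α ≥ 1, the contour automaton A_α accepts a word u over {b, w} if and only if u = (φ(σ^k(W)))^α for some natural number k. In particular, for α = 5 the automaton recognizes exactly the contour words of the balls of the pentagrid, and for α = 7 exactly the contour words of the balls of the heptagrid. -/

import Mathlib

/-- Operations on a 2-level iterated pushdown store. -/
inductive Op (Γ : Type*) where
  | pop1 : Op Γ
  | pop2 : Op Γ
  | push1 : List Γ → Op Γ
  | push2 : List Γ → Op Γ

/-- A 2-level pushdown store: a finite list of entries `(A, s)` with `A` a letter of `Γ`
and `s ∈ Γ*` the inner store of the entry. -/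
abbrev Store (Γ : Type*) := List (Γ × List Γ)

/-- The top symbols of a 2-level store: the letter of the top entry followed by the first
letter of its inner store when that inner store is nonempty; an element of `Γ ∪ Γ²`. -/
def topsym {Γ : Type*} : Store Γ → List Γ
  | [] => []
  | (A, s) :: _ => A :: s.take 1

/-- Apply an operation to a 2-level store (a partial operation):
`pop1` removes the top entry; `pop2` removes the first letter of the inner store of the
top entry (when nonempty); `push1 w` replaces the top entry `(A, s)` by the entries
`(w_1, s), …, (w_m, s)`; `push2 u` replaces the top entry `(A, s)` by `(A, u ++ s)`. -/
def applyOp {Γ : Type*} : Op Γ → Store Γ → Option (Store Γ)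
  | .pop1, _ :: rest => some rest
  | .pop2, (A, _ :: s) :: rest => some ((A, s) :: rest)
  | .push1 w, (_, s) :: rest => some (w.map (fun x => (x, s)) ++ rest)
  | .push2 u, (A, s) :: rest => some ((A, u ++ s) :: rest)
  | _, _ => none

/-- A 2-iterated pushdown automaton with state set `Q`, input alphabet `In` and store
alphabet `Γ`: an initial state `q0`, an initial store symbol `Z`, and a transition table
`δ` assigning to each triple `(q, a, t)` — with `a ∈ In ∪ {ε}` and `t ∈ Γ ∪ Γ²` — a
finite set (list) of instructions `(q', op)`. -/
structure IPDA2 (Q In Γ : Type*) where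
  q0 : Q
  Z : Γ
  δ : Q → Option In → List Γ → List (Q × Op Γ)

/-- A configuration: current state, remaining input word, current 2-level store. -/
abbrev Config (Q In Γ : Type*) := Q × List In × Store Γ

/-- One computation step: an instruction from `δ(q, a, topsym ω)` may be applied, where
`a = ε` (no input consumed) or `a` is the first letter of the remaining input (which is
then consumed); the state changes to `q'` and the operation is applied to the store. -/
inductive IPDA2.Step {Q In Γ : Type*} (M : IPDA2 Q In Γ) :
    Config Q In Γ → Config Q In Γ → Prop
  | eps {q q' : Q} {w : List In} {ω ω' : Store Γ} {op : Op Γ} :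
      (q', op) ∈ M.δ q none (topsym ω) → applyOp op ω = some ω' →
      M.Step (q, w, ω) (q', w, ω')
  | read {q q' : Q} {a : In} {w : List In} {ω ω' : Store Γ} {op : Op Γ} :
      (q', op) ∈ M.δ q (some a) (topsym ω) → applyOp op ω = some ω' →
      M.Step (q, a :: w, ω) (q', w, ω')

/-- A finite sequence of computation steps. -/
def IPDA2.Steps {Q In Γ : Type*} (M : IPDA2 Q In Γ) :
    Config Q In Γ → Config Q In Γ → Prop :=
  Relation.ReflTransGen M.Step

/-- Acceptance: some finite sequence of steps leads from the initial configuration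
`(q0, w, [(Z, ε)])` to a configuration with empty remaining input and empty store. -/
def IPDA2.Accepts {Q In Γ : Type*} (M : IPDA2 Q In Γ) (w : List In) : Prop :=
  ∃ q : Q, M.Steps (M.q0, w, [(M.Z, [])]) (q, [], [])

/-- The two-letter alphabet `{B, W}` of node labels. -/
inductive BW where
  | B : BW
  | W : BW
  deriving DecidableEq

/-- The substitution `σ` determined by `σ(B) = BW` and `σ(W) = BWW`, on letters. -/
def sigmaLetter : BW → List BW
  | .B => [.B, .W]
  | .W => [.B, .W, .W]

/-- The substitution `σ` extended to words (monoid morphism of words). -/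
def sigmaWord (w : List BW) : List BW := w.flatMap sigmaLetter

/-- The two-letter input alphabet `{b, w}`. -/
inductive bw where
  | b : bw
  | w : bw
  deriving DecidableEq

/-- The letter renaming `φ : B ↦ b, W ↦ w`. -/
def phi : BW → bw
  | .B => .b
  | .W => .w

/-- The states of the contour automaton. -/
inductive Qc where
  | q0 : Qc
  | q1 : Qc
  deriving DecidableEq

/-- The store alphabet `Γ = {Z, B, W, F}` of the contour automaton. -/
inductive Γc where
  | Z : Γc
  | B : Γc
  | W : Γc
  | F : Γc
  deriving DecidableEq

/-- The transition table of the contour automaton `A_α`. -/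
def contourδ (α : ℕ) : Qc → Option bw → List Γc → List (Qc × Op Γc)
  | .q0, none, [.Z] => [(.q0, .push2 [.F]), (.q0, .push1 (List.replicate α Γc.W))]
  | .q0, none, [.Z, .F] => [(.q0, .push2 [.F]), (.q0, .push1 (List.replicate α Γc.W))]
  | .q0, none, [.W, .F] => [(.q1, .pop2)]
  | .q0, none, [.B, .F] => [(.q1, .pop2)]
  | .q0, some .b, [.B] => [(.q0, .pop1)]
  | .q0, some .w, [.W] => [(.q0, .pop1)]
  | .q1, none, [.W, .F] => [(.q0, .push1 [.B, .W, .W])]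
  | .q1, none, [.W] => [(.q0, .push1 [.B, .W, .W])]
  | .q1, none, [.B, .F] => [(.q0, .push1 [.B, .W])]
  | .q1, none, [.B] => [(.q0, .push1 [.B, .W])]
  | _, _, _ => []

/-- The contour automaton `A_α`, a 2-iterated pushdown automaton over `{b, w}`. -/
def contourM (α : ℕ) : IPDA2 Qc bw Γc := ⟨.q0, .Z, contourδ α⟩

/-! ### Auxiliary definitions and lemmas -/

/-- Interpret a store letter as a node label (`F`, `Z` map to a junk value). -/
def toBW : Γc → BW
  | .W => .W
  | _ => .B

/-- Interpret a node label as a store letter. -/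
def toΓ : BW → Γc
  | .B => .B
  | .W => .W

@[simp] lemma toBW_toΓ (X : BW) : toBW (toΓ X) = X := by cases X <;> rfl

/-- The word that a store (in state `q0`) is destined to produce. -/
def val0 : Store Γc → List bw
  | [] => []
  | (A, s) :: rest => ((sigmaWord^[s.length]) [toBW A]).map phi ++ val0 rest

/-- The word that a store (in state `q1`) is destined to produce. -/
def val1 : Store Γc → List bw
  | [] => []
  | (A, s) :: rest => ((sigmaWord^[s.length + 1]) [toBW A]).map phi ++ val0 rest

/-- Store invariant: every entry has a `B`/`W` letter with inner store a block of `F`s. -/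
def StoreOK (ω : Store Γc) : Prop :=
  ∀ p ∈ ω, (p.1 = Γc.B ∨ p.1 = Γc.W) ∧ ∃ m, p.2 = List.replicate m Γc.F

lemma sigmaWord_append (u v : List BW) :
    sigmaWord (u ++ v) = sigmaWord u ++ sigmaWord v := by
  simp [sigmaWord]

@[simp] lemma sigmaWord_iter_nil (k : ℕ) : (sigmaWord^[k]) ([] : List BW) = [] := by
  induction k with
  | zero => rfl
  | succ k ih => rw [Function.iterate_succ_apply]; simpa [sigmaWord] using ih

lemma sigmaWord_iter_append (k : ℕ) (u v : List BW) :
    (sigmaWord^[k]) (u ++ v) = (sigmaWord^[k]) u ++ (sigmaWord^[k]) v := by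
  induction k generalizing u v with
  | zero => simp
  | succ k ih => rw [Function.iterate_succ_apply, Function.iterate_succ_apply,
      Function.iterate_succ_apply, sigmaWord_append, ih]

lemma sigmaWord_single (X : BW) : sigmaWord [X] = sigmaLetter X := by
  simp [sigmaWord]

lemma sigmaWord_iter_succ_single (m : ℕ) (X : BW) :
    (sigmaWord^[m + 1]) [X] = (sigmaWord^[m]) (sigmaLetter X) := by
  rw [Function.iterate_succ_apply, sigmaWord_single]

lemma val0_map (L : List BW) (s : List Γc) (ω : Store Γc) :
    val0 (L.map (fun X => (toΓ X, s)) ++ ω)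
      = ((sigmaWord^[s.length]) L).map phi ++ val0 ω := by
  induction L with
  | nil => simp
  | cons X L ih =>
      have h : (X :: L) = [X] ++ L := rfl
      rw [h, sigmaWord_iter_append]
      simp [val0, ih, toBW_toΓ]

lemma map_phi_iter_replicate (k n : ℕ) :
    ((sigmaWord^[k]) (List.replicate n BW.W)).map phi
      = (List.replicate n (((sigmaWord^[k]) [BW.W]).map phi)).flatten := by
  induction n with
  | zero => simp
  | succ n ih =>
      have h : List.replicate (n + 1) BW.W = [BW.W] ++ List.replicate n BW.W := by
        simp [List.replicate_succ]
      rw [h, sigmaWord_iter_append]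
      simp [List.replicate_succ, ih]

/-- Target word. -/
def tgt (α k : ℕ) : List bw :=
  (List.replicate α (((sigmaWord^[k]) [BW.W]).map phi)).flatten

lemma storeOK_tail {p : Γc × List Γc} {ω : Store Γc} (h : StoreOK (p :: ω)) :
    StoreOK ω := fun q hq => h q (List.mem_cons_of_mem _ hq)

/-- Forward invariant: anything that can reach the accepting configuration. -/
lemma contour_fwd (α : ℕ) (qf : Qc) :
    ∀ c : Config Qc bw Γc, (contourM α).Steps c (qf, [], []) →
      ((∀ j : ℕ, c.1 = Qc.q0 → c.2.2 = [(Γc.Z, List.replicate j Γc.F)] →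
          ∃ k, c.2.1 = tgt α k) ∧
        (c.1 = Qc.q0 → StoreOK c.2.2 → c.2.1 = val0 c.2.2) ∧
        (c.1 = Qc.q1 → StoreOK c.2.2 → c.2.2 ≠ [] → c.2.1 = val1 c.2.2)) := by
  intro c h
  induction h using Relation.ReflTransGen.head_induction_on with
  | refl =>
      refine ⟨?_, ?_, ?_⟩
      · intro j _ hj; simp at hj
      · intro _ _; rfl
      · intro _ _ hne; exact absurd rfl hne
  | head hstep hnext ih =>
      rename_i a c'
      obtain ⟨q, u, ω⟩ := a
      refine ⟨?_, ?_, ?_⟩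
      · -- case (a) : store is [(Z, F^j)]
        rintro j rfl rfl
        cases hstep with
        | eps hmem happ =>
            rename_i q' ω' op
            have hmem2 : (q', op) ∈ [(Qc.q0, Op.push2 [Γc.F]),
                (Qc.q0, Op.push1 (List.replicate α Γc.W))] := by
              cases j <;> exact hmem
            rcases List.mem_cons.1 hmem2 with hm | hm
            · -- push2
              injection hm with e1 e2; subst e1; subst e2
              have h2 : applyOp (Op.push2 [Γc.F]) [(Γc.Z, List.replicate j Γc.F)]
                  = some [(Γc.Z, List.replicate (j+1) Γc.F)] := rfl
              rw [h2] at happ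
              have happ' := (Option.some.inj happ).symm
              subst happ'
              exact ih.1 (j+1) rfl rfl
            · -- push1
              rcases List.mem_singleton.1 hm with hm'
              injection hm' with e1 e2; subst e1; subst e2
              have h2 : applyOp (Op.push1 (List.replicate α Γc.W))
                  [(Γc.Z, List.replicate j Γc.F)]
                  = some ((List.replicate α Γc.W).map
                      (fun x => (x, List.replicate j Γc.F)) ++ []) := rfl
              rw [h2] at happ
              have hst : (List.replicate α Γc.W).map
                    (fun x => (x, List.replicate j Γc.F)) ++ ([] : Store Γc)
                  = (List.replicate α BW.W).map
                      (fun X => (toΓ X, List.replicate j Γc.F)) ++ [] := by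
                simp [List.map_replicate, toΓ]
              have happ' : ω' = (List.replicate α BW.W).map
                  (fun X => (toΓ X, List.replicate j Γc.F)) ++ [] :=
                (Option.some.inj happ).symm.trans hst
              subst happ'
              refine ⟨j, ?_⟩
              have hok : StoreOK ((List.replicate α BW.W).map
                  (fun X => (toΓ X, List.replicate j Γc.F)) ++ []) := by
                intro p hp
                simp only [List.append_nil, List.mem_map, List.mem_replicate] at hp
                obtain ⟨x, ⟨-, rfl⟩, rfl⟩ := hp
                exact ⟨Or.inr rfl, j, rfl⟩
              have hu := ih.2.1 rfl hok
              simp only at hu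
              rw [hu, val0_map, List.length_replicate, map_phi_iter_replicate]
              simp [tgt, val0]
        | read hmem happ =>
            rename_i q' aa w ω' op
            exfalso
            cases j <;> cases aa <;> exact absurd hmem (List.not_mem_nil)
      · -- case (b) : state q0, StoreOK store
        rintro rfl hok
        cases ω with
        | nil =>
            exfalso
            cases hstep with
            | eps hmem happ =>
                rename_i q' ω' op
                cases op <;> simp [applyOp] at happ
            | read hmem happ =>
                rename_i q' aa w ω' op
                cases op <;> simp [applyOp] at happ
        | cons p rest =>
            obtain ⟨A, s⟩ := p
            obtain ⟨hA, m, rfl⟩ := hok (A, s) List.mem_cons_self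
            have hrest : StoreOK rest := storeOK_tail hok
            cases hstep with
            | eps hmem happ =>
                rename_i q' ω' op
                cases m with
                | zero =>
                    exfalso
                    rcases hA with rfl | rfl <;> exact absurd hmem (List.not_mem_nil)
                | succ m =>
                    have hmem2 : (q', op) ∈ [(Qc.q1, Op.pop2)] := by
                      rcases hA with rfl | rfl <;> exact hmem
                    rcases List.mem_singleton.1 hmem2 with hm
                    injection hm with e1 e2; subst e1; subst e2
                    have h2 : applyOp Op.pop2 ((A, List.replicate (m+1) Γc.F) :: rest)
                        = some ((A, List.replicate m Γc.F) :: rest) := rfl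
                    rw [h2] at happ
                    have happ' := (Option.some.inj happ).symm
                    subst happ'
                    have hok' : StoreOK ((A, List.replicate m Γc.F) :: rest) := by
                      intro p hp
                      rcases List.mem_cons.1 hp with rfl | hp
                      · exact ⟨hA, m, rfl⟩
                      · exact hrest p hp
                    have hu := ih.2.2 rfl hok' (by simp)
                    simp only at hu
                    rw [hu]
                    simp [val0, val1, List.length_replicate]
            | read hmem happ =>
                rename_i q' aa w ω' op
                cases m with
                | succ m =>
                    exfalso
                    rcases hA with rfl | rfl <;> cases aa <;>
                      exact absurd hmem (List.not_mem_nil)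
                | zero =>
                    rcases hA with rfl | rfl <;> cases aa
                    · -- A = B, aa = b
                      have hmem2 : (q', op) ∈ [(Qc.q0, Op.pop1)] := hmem
                      rcases List.mem_singleton.1 hmem2 with hm
                      injection hm with e1 e2; subst e1; subst e2
                      have h2 : applyOp Op.pop1
                          ((Γc.B, List.replicate 0 Γc.F) :: rest) = some rest := rfl
                      rw [h2] at happ
                      have happ' := (Option.some.inj happ).symm
                      subst happ'
                      have hu := ih.2.1 rfl hrest
                      simp only at hu
                      simp [val0, hu, phi, toBW, sigmaWord]
                    · exact absurd hmem (List.not_mem_nil)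
                    · exact absurd hmem (List.not_mem_nil)
                    · -- A = W, aa = w
                      have hmem2 : (q', op) ∈ [(Qc.q0, Op.pop1)] := hmem
                      rcases List.mem_singleton.1 hmem2 with hm
                      injection hm with e1 e2; subst e1; subst e2
                      have h2 : applyOp Op.pop1
                          ((Γc.W, List.replicate 0 Γc.F) :: rest) = some rest := rfl
                      rw [h2] at happ
                      have happ' := (Option.some.inj happ).symm
                      subst happ'
                      have hu := ih.2.1 rfl hrest
                      simp only at hu
                      simp [val0, hu, phi, toBW, sigmaWord]
      · -- case (c) : state q1
        rintro rfl hok hne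
        cases ω with
        | nil => exact absurd rfl hne
        | cons p rest =>
            obtain ⟨A, s⟩ := p
            obtain ⟨hA, m, rfl⟩ := hok (A, s) List.mem_cons_self
            have hrest : StoreOK rest := storeOK_tail hok
            cases hstep with
            | read hmem happ =>
                rename_i q' aa w ω' op
                exfalso
                rcases hA with rfl | rfl <;> cases m <;>
                  exact absurd hmem (List.not_mem_nil)
            | eps hmem happ =>
                rename_i q' ω' op
                rcases hA with rfl | rfl
                · -- A = B
                  have hmem2 : (q', op) ∈ [(Qc.q0, Op.push1 [Γc.B, Γc.W])] := by
                    cases m <;> exact hmem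
                  rcases List.mem_singleton.1 hmem2 with hm
                  injection hm with e1 e2; subst e1; subst e2
                  have h2 : applyOp (Op.push1 [Γc.B, Γc.W])
                      ((Γc.B, List.replicate m Γc.F) :: rest)
                      = some ((sigmaLetter BW.B).map
                          (fun X => (toΓ X, List.replicate m Γc.F)) ++ rest) := rfl
                  rw [h2] at happ
                  have happ' := (Option.some.inj happ).symm
                  subst happ'
                  have hok' : StoreOK ((sigmaLetter BW.B).map
                      (fun X => (toΓ X, List.replicate m Γc.F)) ++ rest) := by
                    intro p hp
                    rcases List.mem_append.1 hp with hp | hp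
                    · simp only [List.mem_map] at hp
                      obtain ⟨x, -, rfl⟩ := hp
                      exact ⟨by cases x <;> simp [toΓ], m, rfl⟩
                    · exact hrest p hp
                  have hu := ih.2.1 rfl hok'
                  simp only at hu
                  rw [hu, val0_map, List.length_replicate]
                  simp [val1, toBW, List.length_replicate, sigmaWord_iter_succ_single]
                · -- A = W
                  have hmem2 : (q', op) ∈ [(Qc.q0, Op.push1 [Γc.B, Γc.W, Γc.W])] := by
                    cases m <;> exact hmem
                  rcases List.mem_singleton.1 hmem2 with hm
                  injection hm with e1 e2; subst e1; subst e2
                  have h2 : applyOp (Op.push1 [Γc.B, Γc.W, Γc.W])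
                      ((Γc.W, List.replicate m Γc.F) :: rest)
                      = some ((sigmaLetter BW.W).map
                          (fun X => (toΓ X, List.replicate m Γc.F)) ++ rest) := rfl
                  rw [h2] at happ
                  have happ' := (Option.some.inj happ).symm
                  subst happ'
                  have hok' : StoreOK ((sigmaLetter BW.W).map
                      (fun X => (toΓ X, List.replicate m Γc.F)) ++ rest) := by
                    intro p hp
                    rcases List.mem_append.1 hp with hp | hp
                    · simp only [List.mem_map] at hp
                      obtain ⟨x, -, rfl⟩ := hp
                      exact ⟨by cases x <;> simp [toΓ], m, rfl⟩
                    · exact hrest p hp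
                  have hu := ih.2.1 rfl hok'
                  simp only at hu
                  rw [hu, val0_map, List.length_replicate]
                  simp [val1, toBW, List.length_replicate, sigmaWord_iter_succ_single]
/-- Backward: consuming a list of entries `(X, F^m)` reads `φ(σ^m L)`. -/
lemma contour_consume (α : ℕ) :
    ∀ (m : ℕ) (L : List BW) (rest : List bw) (ω : Store Γc),
      (contourM α).Steps
        (Qc.q0, ((sigmaWord^[m]) L).map phi ++ rest,
          L.map (fun X => (toΓ X, List.replicate m Γc.F)) ++ ω)
        (Qc.q0, rest, ω) := by
  intro m
  induction m with
  | zero =>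
      intro L
      induction L with
      | nil =>
          intro rest ω
          simp only [sigmaWord_iter_nil, List.map_nil, List.nil_append]
          exact Relation.ReflTransGen.refl
      | cons X L ihL =>
          intro rest ω
          refine Relation.ReflTransGen.head ?_ (ihL rest ω)
          have : ((sigmaWord^[0]) (X :: L)).map phi ++ rest
              = phi X :: (((sigmaWord^[0]) L).map phi ++ rest) := by simp
          rw [this]
          refine IPDA2.Step.read (a := phi X) (op := .pop1) ?_ rfl
          cases X <;> simp [contourM, contourδ, topsym, phi, toΓ]
  | succ m ihm =>
      intro L
      induction L with
      | nil =>
          intro rest ω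
          simp only [sigmaWord_iter_nil, List.map_nil, List.nil_append]
          exact Relation.ReflTransGen.refl
      | cons X L ihL =>
          intro rest ω
          have hsplit : ((sigmaWord^[m+1]) (X :: L)).map phi ++ rest
              = ((sigmaWord^[m+1]) [X]).map phi
                ++ (((sigmaWord^[m+1]) L).map phi ++ rest) := by
            have : (X :: L) = [X] ++ L := rfl
            rw [this, sigmaWord_iter_append]; simp
          rw [hsplit]
          -- step 1 : pop2
          refine Relation.ReflTransGen.head
            (IPDA2.Step.eps (q' := Qc.q1) (op := .pop2)
              (ω' := (toΓ X, List.replicate m Γc.F)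
                :: (L.map (fun Y => (toΓ Y, List.replicate (m+1) Γc.F)) ++ ω))
              ?_ ?_) ?_
          · cases X <;> simp [contourM, contourδ, topsym, toΓ, List.replicate_succ]
          · simp [applyOp, List.replicate_succ]
          -- step 2 : push1
          refine Relation.ReflTransGen.head
            (IPDA2.Step.eps (q' := Qc.q0)
              (op := .push1 ((sigmaLetter X).map toΓ))
              (ω' := (sigmaLetter X).map (fun Y => (toΓ Y, List.replicate m Γc.F))
                ++ (L.map (fun Y => (toΓ Y, List.replicate (m+1) Γc.F)) ++ ω))
              ?_ ?_) ?_
          · cases X <;> cases m <;>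
              simp [contourM, contourδ, topsym, toΓ, sigmaLetter, List.replicate_succ]
          · simp [applyOp, List.map_map]
          -- consume the pushed entries, then the remaining ones
          refine Relation.ReflTransGen.trans ?_ (ihL rest ω)
          have hw : ((sigmaWord^[m+1]) [X]).map phi
              = ((sigmaWord^[m]) (sigmaLetter X)).map phi := by
            rw [sigmaWord_iter_succ_single]
          rw [hw]
          exact ihm (sigmaLetter X) _ _

/-- For every integer `α ≥ 1`, the contour automaton `A_α` accepts a word `u` over
`{b, w}` if and only if `u = (φ(σ^k(W)))^α` for some `k : ℕ`. In particular, for `α = 5`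
it recognizes exactly the contour words of the balls of the pentagrid, and for `α = 7`
exactly the contour words of the balls of the heptagrid. -/
theorem contourM_language (α : ℕ) (hα : 1 ≤ α) (u : List bw) :
    (contourM α).Accepts u ↔
      ∃ k : ℕ, u = (List.replicate α ((sigmaWord^[k] [BW.W]).map phi)).flatten := by
  constructor
  · rintro ⟨q, h⟩
    have := (contour_fwd α q (Qc.q0, u, [(Γc.Z, [])]) h).1 0 rfl (by simp)
    simpa [tgt] using this
  · rintro ⟨k, rfl⟩
    refine ⟨Qc.q0, ?_⟩
    -- Phase 1: push k copies of F
    have phase1 : ∀ j : ℕ, (contourM α).Steps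
        (Qc.q0, tgt α k, [(Γc.Z, [])])
        (Qc.q0, tgt α k, [(Γc.Z, List.replicate j Γc.F)]) := by
      intro j
      induction j with
      | zero => exact Relation.ReflTransGen.refl
      | succ j ih =>
          refine Relation.ReflTransGen.tail ih
            (IPDA2.Step.eps (q' := Qc.q0) (op := .push2 [Γc.F])
              (ω' := [(Γc.Z, List.replicate (j+1) Γc.F)]) ?_ ?_)
          · cases j <;> simp [contourM, contourδ, topsym, List.replicate_succ]
          · simp [applyOp, List.replicate_succ]
    -- Phase 2: push1 W^α
    have step2 : (contourM α).Step
        (Qc.q0, tgt α k, [(Γc.Z, List.replicate k Γc.F)])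
        (Qc.q0, tgt α k,
          (List.replicate α BW.W).map (fun X => (toΓ X, List.replicate k Γc.F)) ++ []) := by
      refine IPDA2.Step.eps (q' := Qc.q0)
        (op := .push1 (List.replicate α Γc.W)) ?_ ?_
      · cases k <;> simp [contourM, contourδ, topsym, List.replicate_succ]
      · simp [applyOp, List.map_replicate, toΓ]
    -- Phase 3: consume
    have phase3 := contour_consume α k (List.replicate α BW.W) [] []
    have hw : ((sigmaWord^[k]) (List.replicate α BW.W)).map phi ++ [] = tgt α k := by
      simp [tgt, map_phi_iter_replicate]
    rw [hw] at phase3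
    exact ((phase1 k).tail step2).trans phase3
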